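/- Let p_s, p_e ≥ 0 with p_s + p_e ≤ 1 and let W be the substitution/erasure kernel. Let X be a random variable with finitely many values, Y a random variable taking finitely many values in lists over {0,1}, and Y^(3) a random variable taking values in lists over {0,1,★} with |Y^(3)| = |Y| pointwise, such that P(Y^(3)=y′ | X=x, Y=y) = ∏_{i=1}^{|y|} W(y_i, y′_i) whenever P(X=x, Y=y) > 0 and |y′| = |y|. Then I(X; Y^(3)) ≥ I(X; Y) − E[|Y|] · [ H(p_s, p_e, 1−p_s−p_e) + log₂((1−p_e)² + 2p_e²) ], where H(p_s, p_e, 1−p_s−p_e) = −p_s log₂ p_s − p_e log₂ p_e − (1−p_s−p_e) log₂(1−p_s−p_e). -/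

import Mathlib

open scoped BigOperators
open Classical

noncomputable section

/-- A finite probability space: a probability mass function on a finite type. -/
structure FinProb (Ω : Type*) [Fintype Ω] where
  p : Ω → ℝ
  nonneg : ∀ ω, 0 ≤ p ω
  sum_one : ∑ ω, p ω = 1

variable {Ω : Type*} [Fintype Ω]

/-- Probability of an event. -/
def pr (μ : FinProb Ω) (E : Ω → Prop) : ℝ :=
  ∑ ω, if E ω then μ.p ω else 0

/-- Shannon entropy (base 2) of a random variable with finitely many values. -/
def entropy {S : Type*} (μ : FinProb Ω) (U : Ω → S) : ℝ :=
  -∑ u ∈ Finset.univ.image U,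
    pr μ (fun ω => U ω = u) * Real.logb 2 (pr μ (fun ω => U ω = u))

/-- Conditional Shannon entropy `H(U | V)`. -/
def condEntropy {S T : Type*} (μ : FinProb Ω) (U : Ω → S) (V : Ω → T) : ℝ :=
  ∑ v ∈ (Finset.univ.image V).filter (fun v => 0 < pr μ (fun ω => V ω = v)),
    pr μ (fun ω => V ω = v) *
      (-∑ u ∈ Finset.univ.image U,
        (pr μ (fun ω => U ω = u ∧ V ω = v) / pr μ (fun ω => V ω = v)) *
          Real.logb 2 (pr μ (fun ω => U ω = u ∧ V ω = v) / pr μ (fun ω => V ω = v)))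

/-- Mutual information `I(U;V) = H(U) - H(U|V)`. -/
def mutualInfo {S T : Type*} (μ : FinProb Ω) (U : Ω → S) (V : Ω → T) : ℝ :=
  entropy μ U - condEntropy μ U V

/-- Expected length of a list-valued random variable. -/
def expLen {A : Type*} (μ : FinProb Ω) (Y : Ω → List A) : ℝ :=
  ∑ ω, μ.p ω * (Y ω).length

/-- The substitution/erasure kernel on input alphabet `{0,1}` (modeled as `Bool`)
and output alphabet `{0,1,★}` (modeled as `Option Bool`, with `none` the erasure `★`):
`W b b = 1 - ps - pe`, `W b (1-b) = ps`, `W b ★ = pe`. -/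
def subErsKernel (ps pe : ℝ) : Bool → Option Bool → ℝ :=
  fun b c => match c with
  | none => pe
  | some c' => if c' = b then 1 - ps - pe else ps

namespace Stmt11Aux

lemma pr_nonneg (μ : FinProb Ω) (E : Ω → Prop) : 0 ≤ pr μ E := by
  apply Finset.sum_nonneg
  intro ω _
  by_cases h : E ω <;> simp [h, μ.nonneg ω]

lemma pr_mono (μ : FinProb Ω) {E F : Ω → Prop} (h : ∀ ω, E ω → F ω) : pr μ E ≤ pr μ F := by
  apply Finset.sum_le_sum
  intro ω _
  by_cases hE : E ω
  · simp [hE, h ω hE]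
  · simp only [hE, if_false]
    by_cases hF : F ω <;> simp [hF, μ.nonneg ω]

lemma pr_congr (μ : FinProb Ω) {E F : Ω → Prop} (h : ∀ ω, E ω ↔ F ω) : pr μ E = pr μ F := by
  unfold pr
  exact Finset.sum_congr rfl fun ω _ => by rw [if_congr (h ω) rfl rfl]

lemma single_le_pr (μ : FinProb Ω) {E : Ω → Prop} (ω : Ω) (h : E ω) : μ.p ω ≤ pr μ E := by
  have := Finset.single_le_sum (f := fun ω' => if E ω' then μ.p ω' else 0)
    (fun ω' _ => by by_cases h' : E ω' <;> simp [h', μ.nonneg ω']) (Finset.mem_univ ω)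
  simpa [h, pr] using this

lemma pr_eq_zero (μ : FinProb Ω) {E : Ω → Prop} (h : ∀ ω, ¬ E ω) : pr μ E = 0 := by
  unfold pr
  exact Finset.sum_eq_zero fun ω _ => by simp [h ω]

lemma pr_true (μ : FinProb Ω) : pr μ (fun _ => True) = 1 := by
  unfold pr; simpa using μ.sum_one

/-- Master fiber-sum lemma. -/
lemma sum_fiber {T : Type*} [DecidableEq T] (V : Ω → T) (w : Ω → ℝ) (f : T → ℝ) :
    ∑ t ∈ Finset.univ.image V, (∑ ω, if V ω = t then w ω else 0) * f t
      = ∑ ω, w ω * f (V ω) := by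
  have step : ∀ t ∈ Finset.univ.image V,
      (∑ ω, if V ω = t then w ω else 0) * f t
        = ∑ ω, if V ω = t then w ω * f (V ω) else 0 := by
    intro t _
    rw [Finset.sum_mul]
    refine Finset.sum_congr rfl fun ω _ => ?_
    by_cases h : V ω = t
    · simp [h]
    · simp [h]
  rw [Finset.sum_congr rfl step, Finset.sum_comm]
  refine Finset.sum_congr rfl fun ω _ => ?_
  rw [Finset.sum_ite_eq (Finset.univ.image V) (V ω) (fun _ => w ω * f (V ω))]
  simp [Finset.mem_image_of_mem V (Finset.mem_univ ω)]

/-- Fiber-sum lemma with `pr` weights. -/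
lemma sum_fiber_pr {T : Type*} [DecidableEq T] (μ : FinProb Ω) (V : Ω → T) (f : T → ℝ) :
    ∑ t ∈ Finset.univ.image V, pr μ (fun ω => V ω = t) * f t
      = ∑ ω, μ.p ω * f (V ω) := by
  have h := sum_fiber V μ.p f
  rw [← h]
  refine Finset.sum_congr rfl fun t _ => ?_
  congr 1
  unfold pr
  exact Finset.sum_congr rfl fun ω _ => by by_cases hh : V ω = t <;> simp [hh]

/-- Marginalization. -/
lemma pr_marg {T : Type*} [DecidableEq T] (μ : FinProb Ω) (A : Ω → Prop) (V : Ω → T) :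
    pr μ A = ∑ t ∈ Finset.univ.image V, pr μ (fun ω => A ω ∧ V ω = t) := by
  have h := sum_fiber V (fun ω => if A ω then μ.p ω else 0) (fun _ => (1:ℝ))
  simp only [mul_one] at h
  have h2 : ∀ t, pr μ (fun ω => A ω ∧ V ω = t)
      = ∑ ω, if V ω = t then (if A ω then μ.p ω else 0) else 0 := by
    intro t
    unfold pr
    refine Finset.sum_congr rfl fun ω _ => ?_
    by_cases h1 : A ω <;> by_cases h2 : V ω = t <;> simp [h1, h2]
  rw [Finset.sum_congr rfl fun t _ => h2 t, h]
  rfl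

/-- Jensen's inequality for `logb 2`. -/
lemma sum_mul_logb_le {ι : Type*} (s : Finset ι) (w t : ι → ℝ)
    (hw : ∀ i ∈ s, 0 ≤ w i) (hw1 : ∑ i ∈ s, w i = 1)
    (ht : ∀ i ∈ s, 0 < t i) {C : ℝ} (hC : 0 < C) (hsum : ∑ i ∈ s, w i * t i ≤ C) :
    ∑ i ∈ s, w i * Real.logb 2 (t i) ≤ Real.logb 2 C := by
  have hjen := (strictConcaveOn_log_Ioi.concaveOn).le_map_sum (t := s) (w := w) (p := t)
    hw hw1 (fun i hi => ht i hi)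
  simp only [smul_eq_mul] at hjen
  have hpos : 0 < ∑ i ∈ s, w i * t i := by
    have hne : ∃ i ∈ s, 0 < w i := by
      by_contra hcon
      push_neg at hcon
      have : ∑ i ∈ s, w i = 0 := Finset.sum_eq_zero fun i hi =>
        le_antisymm (hcon i hi) (hw i hi)
      rw [hw1] at this; norm_num at this
    obtain ⟨i, hi, hwi⟩ := hne
    exact Finset.sum_pos' (fun j hj => mul_nonneg (hw j hj) (ht j hj).le)
      ⟨i, hi, mul_pos hwi (ht i hi)⟩
  have hlog : Real.log (∑ i ∈ s, w i * t i) ≤ Real.log C := Real.log_le_log hpos hsum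
  have hlog2 : (0:ℝ) < Real.log 2 := Real.log_pos one_lt_two
  simp only [Real.logb]
  have hre : ∑ i ∈ s, w i * (Real.log (t i) / Real.log 2)
      = (∑ i ∈ s, w i * Real.log (t i)) / Real.log 2 := by
    rw [Finset.sum_div]
    exact Finset.sum_congr rfl fun i _ => (mul_div_assoc _ _ _).symm
  rw [hre]
  gcongr
  exact hjen.trans hlog


/-- termwise: `(∏ f) * logb (∏ f) = (∏ f) * ∑ logb f` for nonneg `f`. -/
lemma prod_mul_logb_prod {ι : Type*} (s : Finset ι) (f : ι → ℝ) (hf : ∀ i ∈ s, 0 ≤ f i) :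
    (∏ i ∈ s, f i) * Real.logb 2 (∏ i ∈ s, f i)
      = (∏ i ∈ s, f i) * ∑ i ∈ s, Real.logb 2 (f i) := by
  by_cases hz : ∀ i ∈ s, f i ≠ 0
  · rw [Real.logb_prod s f hz]
  · push_neg at hz
    obtain ⟨i, hi, hzi⟩ := hz
    rw [Finset.prod_eq_zero hi hzi]
    simp

/-- Entropy of a product distribution over a pi type. -/
lemma sum_pi_prod_logb {n : ℕ} {A : Type*} [Fintype A] (q : Fin n → A → ℝ)
    (hq : ∀ i a, 0 ≤ q i a) (hq1 : ∀ i, ∑ a, q i a = 1) :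
    ∑ w : Fin n → A, (∏ i, q i (w i)) * Real.logb 2 (∏ i, q i (w i))
      = ∑ i, ∑ a, q i a * Real.logb 2 (q i a) := by
  have step1 : ∀ w : Fin n → A,
      (∏ i, q i (w i)) * Real.logb 2 (∏ i, q i (w i))
        = ∑ i, (∏ j, q j (w j)) * Real.logb 2 (q i (w i)) := by
    intro w
    rw [prod_mul_logb_prod _ _ (fun i _ => hq i (w i)), Finset.mul_sum]
  rw [Finset.sum_congr rfl fun w _ => step1 w, Finset.sum_comm]
  refine Finset.sum_congr rfl fun i _ => ?_
  have key : ∀ w : Fin n → A, (∏ j, q j (w j)) * Real.logb 2 (q i (w i))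
      = ∏ j, (q j (w j) * (if j = i then Real.logb 2 (q j (w j)) else 1)) := by
    intro w
    rw [Finset.prod_mul_distrib]
    congr 1
    rw [Finset.prod_ite_eq' Finset.univ i (fun j => Real.logb 2 (q j (w j)))]
    simp
  rw [Finset.sum_congr rfl fun w _ => key w]
  have hps := Finset.prod_univ_sum (fun _ : Fin n => (Finset.univ : Finset A))
    (fun j a => q j a * (if j = i then Real.logb 2 (q j a) else 1))
  rw [Fintype.piFinset_univ] at hps
  rw [← hps]
  have : ∀ j : Fin n, ∑ a, q j a * (if j = i then Real.logb 2 (q j a) else 1)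
      = if j = i then ∑ a, q j a * Real.logb 2 (q j a) else 1 := by
    intro j
    by_cases h : j = i
    · simp [h]
    · simp [h, hq1 j]
  rw [Finset.prod_congr rfl fun j _ => this j]
  rw [Finset.prod_ite_eq' Finset.univ i (fun j => ∑ a, q j a * Real.logb 2 (q j a))]
  simp

section Kernel
variable {ps pe : ℝ}

lemma kernel_nonneg (hps : 0 ≤ ps) (hpe : 0 ≤ pe) (hspe : ps + pe ≤ 1) (b : Bool) (c : Option Bool) :
    0 ≤ subErsKernel ps pe b c := by
  cases c with
  | none => simpa [subErsKernel] using hpe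
  | some c' =>
    simp only [subErsKernel]
    split
    · linarith
    · exact hps

lemma kernel_sum_one (ps pe : ℝ) (b : Bool) : ∑ c : Option Bool, subErsKernel ps pe b c = 1 := by
  rw [Fintype.sum_option]
  cases b <;> simp [subErsKernel] <;> ring

lemma kernel_sum_logb (ps pe : ℝ) (b : Bool) :
    ∑ c : Option Bool, subErsKernel ps pe b c * Real.logb 2 (subErsKernel ps pe b c)
      = ps * Real.logb 2 ps + pe * Real.logb 2 pe
        + (1 - ps - pe) * Real.logb 2 (1 - ps - pe) := by
  rw [Fintype.sum_option]
  cases b <;> simp [subErsKernel] <;> ring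

lemma kernel_sum_g (ps pe : ℝ) (b : Bool) :
    ∑ c : Option Bool, subErsKernel ps pe b c
        * (subErsKernel ps pe false c + subErsKernel ps pe true c)
      = (1 - pe) ^ 2 + 2 * pe ^ 2 := by
  rw [Fintype.sum_option]
  cases b <;> simp [subErsKernel] <;> ring

end Kernel

/-- product of kernel values along two lists -/
def prodW (ps pe : ℝ) (y : List Bool) (y' : List (Option Bool)) : ℝ :=
  ∏ i ∈ Finset.range y.length, subErsKernel ps pe (y.getD i false) (y'.getD i none)

lemma getD_ofFn {α : Type*} {n : ℕ} (f : Fin n → α) (i : Fin n) (d : α) :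
    (List.ofFn f).getD i d = f i := by
  rw [List.getD_eq_getElem _ _ (by simp [i.isLt])]
  simp [List.getElem_ofFn]

lemma ofFn_getD {α : Type*} {n : ℕ} (y : List α) (h : y.length = n) (d : α) :
    List.ofFn (fun i : Fin n => y.getD i d) = y := by
  subst h
  have : (fun i : Fin y.length => y.getD i d) = fun i : Fin y.length => y[(i : ℕ)] := by
    funext i
    rw [List.getD_eq_getElem _ _ i.isLt]
  rw [this, List.ofFn_getElem]

lemma prodW_ofFn (ps pe : ℝ) {n : ℕ} (v : Fin n → Bool) (w : Fin n → Option Bool) :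
    prodW ps pe (List.ofFn v) (List.ofFn w) = ∏ i, subErsKernel ps pe (v i) (w i) := by
  unfold prodW
  rw [List.length_ofFn]
  rw [← Fin.prod_univ_eq_prod_range
    (fun i => subErsKernel ps pe ((List.ofFn v).getD i false) ((List.ofFn w).getD i none)) n]
  exact Finset.prod_congr rfl fun i _ => by rw [getD_ofFn, getD_ofFn]

lemma prodW_ofFn_right (ps pe : ℝ) {n : ℕ} (y : List Bool) (hy : y.length = n)
    (w : Fin n → Option Bool) :
    prodW ps pe y (List.ofFn w) = ∏ i : Fin n, subErsKernel ps pe (y.getD (i:ℕ) false) (w i) := by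
  conv_lhs => rw [← ofFn_getD y hy false]
  rw [prodW_ofFn]

lemma prodW_ofFn_left (ps pe : ℝ) {n : ℕ} (v : Fin n → Bool) (y' : List (Option Bool)) :
    prodW ps pe (List.ofFn v) y' = ∏ i : Fin n, subErsKernel ps pe (v i) (y'.getD (i:ℕ) none) := by
  unfold prodW
  rw [List.length_ofFn]
  rw [← Fin.prod_univ_eq_prod_range
    (fun i => subErsKernel ps pe ((List.ofFn v).getD i false) (y'.getD i none)) n]
  exact Finset.prod_congr rfl fun i _ => by rw [getD_ofFn]

lemma prodW_nonneg (hps : 0 ≤ ps) (hpe : 0 ≤ pe) (hspe : ps + pe ≤ 1)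
    (y : List Bool) (y' : List (Option Bool)) : 0 ≤ prodW ps pe y y' :=
  Finset.prod_nonneg fun i _ => kernel_nonneg hps hpe hspe _ _


section Channel
variable {S : Type*} (μ : FinProb Ω) (ps pe : ℝ)
variable (X : Ω → S) (Y : Ω → List Bool) (Y3 : Ω → List (Option Bool))

lemma chanK0
    (hcond : ∀ (x : S) (n : ℕ) (y : Fin n → Bool) (y' : Fin n → Option Bool),
      0 < pr μ (fun ω => X ω = x ∧ Y ω = List.ofFn y) →
      pr μ (fun ω => Y3 ω = List.ofFn y' ∧ X ω = x ∧ Y ω = List.ofFn y) /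
        pr μ (fun ω => X ω = x ∧ Y ω = List.ofFn y) = ∏ i, subErsKernel ps pe (y i) (y' i))
    (x : S) (y : List Bool) (y' : List (Option Bool)) (hl : y'.length = y.length) :
    pr μ (fun ω => Y3 ω = y' ∧ X ω = x ∧ Y ω = y)
      = pr μ (fun ω => X ω = x ∧ Y ω = y) * prodW ps pe y y' := by
  have hy : List.ofFn (fun i : Fin y.length => y.getD (i:ℕ) false) = y := ofFn_getD y rfl false
  have hy' : List.ofFn (fun i : Fin y.length => y'.getD (i:ℕ) none) = y' := ofFn_getD y' hl none
  have hprod : (∏ i : Fin y.length,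
      subErsKernel ps pe (y.getD (i:ℕ) false) (y'.getD (i:ℕ) none)) = prodW ps pe y y' := by
    rw [← prodW_ofFn ps pe (fun i : Fin y.length => y.getD (i:ℕ) false)
      (fun i : Fin y.length => y'.getD (i:ℕ) none), hy, hy']
  rcases eq_or_lt_of_le (pr_nonneg μ (fun ω => X ω = x ∧ Y ω = y)) with h0 | h0
  · have h1 : pr μ (fun ω => Y3 ω = y' ∧ X ω = x ∧ Y ω = y) = 0 :=
      le_antisymm (le_trans (pr_mono μ fun ω h => h.2) h0.symm.le) (pr_nonneg μ _)
    rw [h1, ← h0, zero_mul]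
  · have h2 := hcond x y.length (fun i : Fin y.length => y.getD (i:ℕ) false)
      (fun i : Fin y.length => y'.getD (i:ℕ) none) (by rw [hy]; exact h0)
    rw [hy, hy'] at h2
    rw [div_eq_iff (ne_of_gt h0)] at h2
    rw [h2, hprod, mul_comm]

lemma chanK1
    (hcond : ∀ (x : S) (n : ℕ) (y : Fin n → Bool) (y' : Fin n → Option Bool),
      0 < pr μ (fun ω => X ω = x ∧ Y ω = List.ofFn y) →
      pr μ (fun ω => Y3 ω = List.ofFn y' ∧ X ω = x ∧ Y ω = List.ofFn y) /
        pr μ (fun ω => X ω = x ∧ Y ω = List.ofFn y) = ∏ i, subErsKernel ps pe (y i) (y' i))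
    (y : List Bool) (y' : List (Option Bool)) (hl : y'.length = y.length) :
    pr μ (fun ω => Y ω = y ∧ Y3 ω = y')
      = pr μ (fun ω => Y ω = y) * prodW ps pe y y' := by
  have hm := pr_marg μ (fun ω => Y ω = y ∧ Y3 ω = y') X
  have hre : ∀ x : S, pr μ (fun ω => (Y ω = y ∧ Y3 ω = y') ∧ X ω = x)
      = pr μ (fun ω => X ω = x ∧ Y ω = y) * prodW ps pe y y' := by
    intro x
    rw [pr_congr μ (F := fun ω => Y3 ω = y' ∧ X ω = x ∧ Y ω = y) (fun ω => by tauto)]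
    exact chanK0 μ ps pe X Y Y3 hcond x y y' hl
  rw [hm, Finset.sum_congr rfl fun x _ => hre x, ← Finset.sum_mul]
  congr 1
  rw [pr_marg μ (fun ω => Y ω = y) X]
  exact Finset.sum_congr rfl fun x _ => pr_congr μ fun ω => by tauto

lemma chanK2 (hlen : ∀ ω, (Y3 ω).length = (Y ω).length)
    (y : List Bool) (y' : List (Option Bool)) (hl : y'.length ≠ y.length) :
    pr μ (fun ω => Y ω = y ∧ Y3 ω = y') = 0 := by
  refine pr_eq_zero μ fun ω h => hl ?_
  rw [← h.1, ← h.2]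
  exact hlen ω

end Channel

lemma mul_div_le_aux {q c a b d : ℝ} (hq0 : 0 ≤ q) (hqc : q ≤ c) (ha : 0 ≤ a)
    (hb : 0 ≤ b) (hd : 0 ≤ d) : q * (a * b / (c * d)) ≤ a * b / d := by
  rcases eq_or_lt_of_le (hq0.trans hqc) with hc0 | hc0
  · have hq : q = 0 := le_antisymm (hqc.trans hc0.symm.le) hq0
    rw [hq, zero_mul]
    positivity
  · have hrw : a * b / (c * d) = a * b / d / c := by
      rw [div_div, mul_comm d c]
    rw [hrw]
    calc q * (a * b / d / c) ≤ c * (a * b / d / c) :=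
          mul_le_mul_of_nonneg_right hqc (by positivity)
      _ = a * b / d := by
          rw [mul_comm, div_mul_cancel₀ _ (ne_of_gt hc0)]

/-- T1 bound: the general "reverse data processing" Jensen term is ≤ 0. -/
lemma T1_le {S T₁ T₂ : Type*} (μ : FinProb Ω) (X : Ω → S) (Y : Ω → T₁) (Y3 : Ω → T₂) :
    ∑ ω ∈ Finset.univ.filter (fun ω => 0 < μ.p ω), μ.p ω *
      Real.logb 2 (pr μ (fun ω' => X ω' = X ω ∧ Y ω' = Y ω)
          * pr μ (fun ω' => Y ω' = Y ω ∧ Y3 ω' = Y3 ω) /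
        (pr μ (fun ω' => X ω' = X ω ∧ Y3 ω' = Y3 ω) * pr μ (fun ω' => Y ω' = Y ω))) ≤ 0 := by
  classical
  set s := Finset.univ.filter (fun ω => 0 < μ.p ω) with hs
  have hmem : ∀ ω ∈ s, 0 < μ.p ω := fun ω hω => (Finset.mem_filter.mp hω).2
  have hsum1 : ∑ ω ∈ s, μ.p ω = 1 := by
    rw [← μ.sum_one]
    refine Finset.sum_subset (Finset.filter_subset _ _) fun ω _ hω => ?_
    rw [hs, Finset.mem_filter] at hω
    push_neg at hω
    exact le_antisymm (hω (Finset.mem_univ ω)) (μ.nonneg ω)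
  set t : Ω → ℝ := fun ω => pr μ (fun ω' => X ω' = X ω ∧ Y ω' = Y ω)
      * pr μ (fun ω' => Y ω' = Y ω ∧ Y3 ω' = Y3 ω) /
        (pr μ (fun ω' => X ω' = X ω ∧ Y3 ω' = Y3 ω) * pr μ (fun ω' => Y ω' = Y ω)) with htdef
  have htpos : ∀ ω ∈ s, 0 < t ω := by
    intro ω hω
    have hp := hmem ω hω
    have h1 : 0 < pr μ (fun ω' => X ω' = X ω ∧ Y ω' = Y ω) :=
      lt_of_lt_of_le hp (single_le_pr μ ω ⟨rfl, rfl⟩)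
    have h2 : 0 < pr μ (fun ω' => Y ω' = Y ω ∧ Y3 ω' = Y3 ω) :=
      lt_of_lt_of_le hp (single_le_pr μ ω ⟨rfl, rfl⟩)
    have h3 : 0 < pr μ (fun ω' => X ω' = X ω ∧ Y3 ω' = Y3 ω) :=
      lt_of_lt_of_le hp (single_le_pr μ ω ⟨rfl, rfl⟩)
    have h4 : 0 < pr μ (fun ω' => Y ω' = Y ω) :=
      lt_of_lt_of_le hp (single_le_pr μ ω rfl)
    rw [htdef]
    positivity
  have hkey : ∑ ω ∈ s, μ.p ω * t ω ≤ 1 := by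
    have hext : ∑ ω ∈ s, μ.p ω * t ω = ∑ ω, μ.p ω * t ω := by
      refine Finset.sum_subset (Finset.filter_subset _ _) fun ω _ hω => ?_
      rw [hs, Finset.mem_filter] at hω
      push_neg at hω
      have : μ.p ω = 0 := le_antisymm (hω (Finset.mem_univ ω)) (μ.nonneg ω)
      rw [this, zero_mul]
    rw [hext]
    have hmaster := sum_fiber_pr μ (fun ω => ((X ω, Y ω), Y3 ω))
      (fun τ : (S × T₁) × T₂ => pr μ (fun ω => X ω = τ.1.1 ∧ Y ω = τ.1.2)
          * pr μ (fun ω => Y ω = τ.1.2 ∧ Y3 ω = τ.2) /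
        (pr μ (fun ω => X ω = τ.1.1 ∧ Y3 ω = τ.2) * pr μ (fun ω => Y ω = τ.1.2)))
    rw [← hmaster]
    -- bound the fiber sum
    have hstep : ∀ τ ∈ Finset.univ.image (fun ω => ((X ω, Y ω), Y3 ω)),
        pr μ (fun ω => ((X ω, Y ω), Y3 ω) = τ) *
          (pr μ (fun ω => X ω = τ.1.1 ∧ Y ω = τ.1.2)
            * pr μ (fun ω => Y ω = τ.1.2 ∧ Y3 ω = τ.2) /
            (pr μ (fun ω => X ω = τ.1.1 ∧ Y3 ω = τ.2) * pr μ (fun ω => Y ω = τ.1.2)))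
        ≤ pr μ (fun ω => X ω = τ.1.1 ∧ Y ω = τ.1.2)
            * pr μ (fun ω => Y ω = τ.1.2 ∧ Y3 ω = τ.2) / pr μ (fun ω => Y ω = τ.1.2) := by
      intro τ _
      refine mul_div_le_aux (pr_nonneg μ _) ?_ (pr_nonneg μ _) (pr_nonneg μ _) (pr_nonneg μ _)
      refine pr_mono μ fun ω h => ?_
      rcases τ with ⟨⟨x, y⟩, y'⟩
      simp only [Prod.mk.injEq] at h
      exact ⟨h.1.1, h.2⟩
    refine le_trans (Finset.sum_le_sum hstep) ?_
    -- now bound ∑ over image of u τ by extending to a product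
    have hsub : Finset.univ.image (fun ω => ((X ω, Y ω), Y3 ω))
        ⊆ (Finset.univ.image (fun ω => (X ω, Y ω))) ×ˢ (Finset.univ.image Y3) := by
      intro τ hτ
      obtain ⟨ω, _, rfl⟩ := Finset.mem_image.mp hτ
      exact Finset.mem_product.mpr ⟨Finset.mem_image_of_mem _ (Finset.mem_univ ω),
        Finset.mem_image_of_mem _ (Finset.mem_univ ω)⟩
    refine le_trans (Finset.sum_le_sum_of_subset_of_nonneg hsub fun τ _ _ =>
      div_nonneg (mul_nonneg (pr_nonneg μ _) (pr_nonneg μ _)) (pr_nonneg μ _)) ?_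
    rw [Finset.sum_product (Finset.univ.image (fun ω => (X ω, Y ω))) (Finset.univ.image Y3)
      (fun τ : (S × T₁) × T₂ => pr μ (fun ω => X ω = τ.1.1 ∧ Y ω = τ.1.2)
        * pr μ (fun ω => Y ω = τ.1.2 ∧ Y3 ω = τ.2) / pr μ (fun ω => Y ω = τ.1.2))]
    have hinner : ∀ p ∈ Finset.univ.image (fun ω => (X ω, Y ω)),
        (∑ y' ∈ Finset.univ.image Y3,
          pr μ (fun ω => X ω = p.1 ∧ Y ω = p.2) * pr μ (fun ω => Y ω = p.2 ∧ Y3 ω = y') /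
            pr μ (fun ω => Y ω = p.2))
        ≤ pr μ (fun ω => X ω = p.1 ∧ Y ω = p.2) := by
      intro p _
      have hfac : ∀ y' : T₂, pr μ (fun ω => X ω = p.1 ∧ Y ω = p.2)
          * pr μ (fun ω => Y ω = p.2 ∧ Y3 ω = y') / pr μ (fun ω => Y ω = p.2)
          = (pr μ (fun ω => X ω = p.1 ∧ Y ω = p.2) / pr μ (fun ω => Y ω = p.2))
            * pr μ (fun ω => Y ω = p.2 ∧ Y3 ω = y') := fun y' => by ring
      rw [Finset.sum_congr rfl fun y' _ => hfac y', ← Finset.mul_sum]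
      rw [← pr_marg μ (fun ω => Y ω = p.2) Y3]
      rcases eq_or_lt_of_le (pr_nonneg μ (fun ω => Y ω = p.2)) with h0 | h0
      · have hz : pr μ (fun ω => X ω = p.1 ∧ Y ω = p.2) = 0 :=
          le_antisymm (le_trans (pr_mono μ fun ω h => h.2) h0.symm.le) (pr_nonneg μ _)
        rw [hz]
        simp
      · rw [div_mul_cancel₀ _ (ne_of_gt h0)]
    refine le_trans (Finset.sum_le_sum hinner) ?_
    have hfinal : ∑ p ∈ Finset.univ.image (fun ω => (X ω, Y ω)),
        pr μ (fun ω => X ω = p.1 ∧ Y ω = p.2) = 1 := by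
      rw [Finset.sum_congr rfl fun (p : S × T₁) (_ : p ∈ Finset.univ.image (fun ω => (X ω, Y ω))) =>
        pr_congr μ (F := fun ω => True ∧ (X ω, Y ω) = p) fun ω =>
          ⟨fun h => ⟨trivial, Prod.ext h.1 h.2⟩,
           fun h => ⟨congrArg Prod.fst h.2, congrArg Prod.snd h.2⟩⟩]
      rw [← pr_marg μ (fun _ => True) (fun ω => (X ω, Y ω)), pr_true]
    rw [hfinal]
  have := sum_mul_logb_le s μ.p t (fun ω hω => (μ.nonneg ω)) hsum1 htpos one_pos hkey
  rw [Real.logb_one] at this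
  exact this

section T2
variable {S : Type*} (μ : FinProb Ω) (ps pe : ℝ)
variable (X : Ω → S) (Y : Ω → List Bool) (Y3 : Ω → List (Option Bool))

lemma T2_inner (hps : 0 ≤ ps) (hpe : 0 ≤ pe) (hspe : ps + pe ≤ 1)
    (hlen : ∀ ω, (Y3 ω).length = (Y ω).length)
    (hcond : ∀ (x : S) (n : ℕ) (y : Fin n → Bool) (y' : Fin n → Option Bool),
      0 < pr μ (fun ω => X ω = x ∧ Y ω = List.ofFn y) →
      pr μ (fun ω => Y3 ω = List.ofFn y' ∧ X ω = x ∧ Y ω = List.ofFn y) /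
        pr μ (fun ω => X ω = x ∧ Y ω = List.ofFn y) = ∏ i, subErsKernel ps pe (y i) (y' i))
    (y : List Bool) :
    ∑ y' ∈ Finset.univ.image Y3, pr μ (fun ω => Y ω = y ∧ Y3 ω = y')
        * (- Real.logb 2 (prodW ps pe y y'))
      = pr μ (fun ω => Y ω = y) * ((y.length : ℝ) *
          (-(ps * Real.logb 2 ps + pe * Real.logb 2 pe
            + (1 - ps - pe) * Real.logb 2 (1 - ps - pe)))) := by
  rcases eq_or_lt_of_le (pr_nonneg μ (fun ω => Y ω = y)) with h0 | h0
  · rw [← h0, zero_mul]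
    refine Finset.sum_eq_zero fun y' _ => ?_
    have hz : pr μ (fun ω => Y ω = y ∧ Y3 ω = y') = 0 :=
      le_antisymm (le_trans (pr_mono μ fun ω h => h.1) h0.symm.le) (pr_nonneg μ _)
    rw [hz, zero_mul]
  · rw [← Finset.sum_filter_add_sum_filter_not (Finset.univ.image Y3)
      (fun y' => y'.length = y.length)]
    have hz2 : ∑ y' ∈ (Finset.univ.image Y3).filter (fun y' => ¬ y'.length = y.length),
        pr μ (fun ω => Y ω = y ∧ Y3 ω = y') * (- Real.logb 2 (prodW ps pe y y')) = 0 := by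
      refine Finset.sum_eq_zero fun y' hy' => ?_
      rw [chanK2 μ Y Y3 hlen y y' (Finset.mem_filter.mp hy').2, zero_mul]
    rw [hz2, add_zero]
    have hre : ∀ y' ∈ (Finset.univ.image Y3).filter (fun y' => y'.length = y.length),
        pr μ (fun ω => Y ω = y ∧ Y3 ω = y') * (- Real.logb 2 (prodW ps pe y y'))
          = pr μ (fun ω => Y ω = y) *
            (prodW ps pe y y' * (- Real.logb 2 (prodW ps pe y y'))) := by
      intro y' hy'
      rw [chanK1 μ ps pe X Y Y3 hcond y y' (Finset.mem_filter.mp hy').2]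
      ring
    rw [Finset.sum_congr rfl hre]
    have hinj : ∀ a ∈ (Finset.univ.image Y3).filter (fun y' => y'.length = y.length),
        ∀ b ∈ (Finset.univ.image Y3).filter (fun y' => y'.length = y.length),
        (fun i : Fin y.length => a.getD (i:ℕ) none) = (fun i : Fin y.length => b.getD (i:ℕ) none)
          → a = b := by
      intro a ha b hb hab
      rw [← ofFn_getD a (Finset.mem_filter.mp ha).2 none,
        ← ofFn_getD b (Finset.mem_filter.mp hb).2 none]
      exact congrArg List.ofFn hab
    have himg := Finset.sum_image (s := (Finset.univ.image Y3).filter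
        (fun y' => y'.length = y.length))
      (g := fun y' => fun i : Fin y.length => y'.getD (i:ℕ) none)
      (f := fun w : Fin y.length → Option Bool => pr μ (fun ω => Y ω = y) *
        (prodW ps pe y (List.ofFn w) * (- Real.logb 2 (prodW ps pe y (List.ofFn w))))) (fun a ha b hb hab => hinj a ha b hb hab)
    have hFeq : ∀ y' ∈ (Finset.univ.image Y3).filter (fun y' => y'.length = y.length),
        pr μ (fun ω => Y ω = y) *
          (prodW ps pe y (List.ofFn (fun i : Fin y.length => y'.getD (i:ℕ) none)) *
            (- Real.logb 2 (prodW ps pe y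
              (List.ofFn (fun i : Fin y.length => y'.getD (i:ℕ) none)))))
        = pr μ (fun ω => Y ω = y) *
            (prodW ps pe y y' * (- Real.logb 2 (prodW ps pe y y'))) := by
      intro y' hy'
      rw [ofFn_getD y' (Finset.mem_filter.mp hy').2 none]
    rw [← Finset.sum_congr rfl hFeq, ← himg]
    have hext : ∑ w ∈ ((Finset.univ.image Y3).filter
          (fun y' => y'.length = y.length)).image
            (fun y' => fun i : Fin y.length => y'.getD (i:ℕ) none),
        pr μ (fun ω => Y ω = y) *
          (prodW ps pe y (List.ofFn w) * (- Real.logb 2 (prodW ps pe y (List.ofFn w))))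
      = ∑ w : Fin y.length → Option Bool,
        pr μ (fun ω => Y ω = y) *
          (prodW ps pe y (List.ofFn w) * (- Real.logb 2 (prodW ps pe y (List.ofFn w)))) := by
      refine Finset.sum_subset (Finset.subset_univ _) fun w _ hw => ?_
      have hpr0 : pr μ (fun ω => Y ω = y ∧ Y3 ω = List.ofFn w)
          = pr μ (fun ω => Y ω = y) * prodW ps pe y (List.ofFn w) :=
        chanK1 μ ps pe X Y Y3 hcond y (List.ofFn w) (List.length_ofFn)
      by_cases hmem : List.ofFn w ∈ Finset.univ.image Y3
      · exfalso
        apply hw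
        refine Finset.mem_image.mpr ⟨List.ofFn w,
          Finset.mem_filter.mpr ⟨hmem, List.length_ofFn⟩, ?_⟩
        funext i
        exact getD_ofFn w i none
      · have h00 : pr μ (fun ω => Y ω = y ∧ Y3 ω = List.ofFn w) = 0 :=
          pr_eq_zero μ fun ω h => hmem (by
            rw [← h.2]
            exact Finset.mem_image_of_mem Y3 (Finset.mem_univ ω))
        have hzz : prodW ps pe y (List.ofFn w) = 0 := by
          rcases mul_eq_zero.mp (hpr0 ▸ h00) with hc | hc
          · exact absurd hc (ne_of_gt h0)
          · exact hc
        rw [hzz]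
        ring
    rw [hext]
    have hent := sum_pi_prod_logb (n := y.length) (A := Option Bool)
      (fun i c => subErsKernel ps pe (y.getD (i:ℕ) false) c)
      (fun i a => kernel_nonneg hps hpe hspe _ _) (fun i => kernel_sum_one ps pe _)
    have hstep : ∑ w : Fin y.length → Option Bool,
        pr μ (fun ω => Y ω = y) *
          (prodW ps pe y (List.ofFn w) * (- Real.logb 2 (prodW ps pe y (List.ofFn w))))
      = pr μ (fun ω => Y ω = y) *
          (- ∑ w : Fin y.length → Option Bool,
            (∏ i : Fin y.length, subErsKernel ps pe (y.getD (i:ℕ) false) (w i)) *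
              Real.logb 2 (∏ i : Fin y.length, subErsKernel ps pe (y.getD (i:ℕ) false) (w i))) := by
      rw [← Finset.mul_sum, ← Finset.sum_neg_distrib]
      congr 1
      refine Finset.sum_congr rfl fun w _ => ?_
      rw [prodW_ofFn_right ps pe y rfl w]
      ring
    have hcount : ∑ i : Fin y.length, ∑ a : Option Bool,
        subErsKernel ps pe (y.getD (i:ℕ) false) a *
          Real.logb 2 (subErsKernel ps pe (y.getD (i:ℕ) false) a)
      = (y.length : ℝ) * (ps * Real.logb 2 ps + pe * Real.logb 2 pe
          + (1 - ps - pe) * Real.logb 2 (1 - ps - pe)) := by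
      rw [Finset.sum_congr rfl fun (i : Fin y.length) (_ : i ∈ Finset.univ) =>
        kernel_sum_logb ps pe (y.getD (i:ℕ) false)]
      rw [Finset.sum_const, Finset.card_univ, Fintype.card_fin, nsmul_eq_mul]
    have hval : ∑ w : Fin y.length → Option Bool,
        (∏ i : Fin y.length, subErsKernel ps pe (y.getD (i:ℕ) false) (w i)) *
          Real.logb 2 (∏ i : Fin y.length, subErsKernel ps pe (y.getD (i:ℕ) false) (w i))
      = (y.length : ℝ) * (ps * Real.logb 2 ps + pe * Real.logb 2 pe
          + (1 - ps - pe) * Real.logb 2 (1 - ps - pe)) := hent.trans hcount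
    rw [hstep, hval]
    ring

lemma T2_eq (hps : 0 ≤ ps) (hpe : 0 ≤ pe) (hspe : ps + pe ≤ 1)
    (hlen : ∀ ω, (Y3 ω).length = (Y ω).length)
    (hcond : ∀ (x : S) (n : ℕ) (y : Fin n → Bool) (y' : Fin n → Option Bool),
      0 < pr μ (fun ω => X ω = x ∧ Y ω = List.ofFn y) →
      pr μ (fun ω => Y3 ω = List.ofFn y' ∧ X ω = x ∧ Y ω = List.ofFn y) /
        pr μ (fun ω => X ω = x ∧ Y ω = List.ofFn y) = ∏ i, subErsKernel ps pe (y i) (y' i)) :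
    ∑ ω ∈ Finset.univ.filter (fun ω => 0 < μ.p ω),
        μ.p ω * (- Real.logb 2 (prodW ps pe (Y ω) (Y3 ω)))
      = (∑ ω, μ.p ω * ((Y ω).length : ℝ)) *
          (-(ps * Real.logb 2 ps + pe * Real.logb 2 pe
            + (1 - ps - pe) * Real.logb 2 (1 - ps - pe))) := by
  have hext : ∑ ω ∈ Finset.univ.filter (fun ω => 0 < μ.p ω),
      μ.p ω * (- Real.logb 2 (prodW ps pe (Y ω) (Y3 ω)))
      = ∑ ω, μ.p ω * (- Real.logb 2 (prodW ps pe (Y ω) (Y3 ω))) := by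
    refine Finset.sum_subset (Finset.filter_subset _ _) fun ω _ hω => ?_
    rw [Finset.mem_filter] at hω
    push_neg at hω
    rw [le_antisymm (hω (Finset.mem_univ ω)) (μ.nonneg ω), zero_mul]
  rw [hext]
  have hmaster := sum_fiber_pr μ (fun ω => (Y ω, Y3 ω))
    (fun τ : List Bool × List (Option Bool) => - Real.logb 2 (prodW ps pe τ.1 τ.2))
  rw [← hmaster]
  have hcongr : ∀ τ ∈ Finset.univ.image (fun ω => (Y ω, Y3 ω)),
      pr μ (fun ω => (Y ω, Y3 ω) = τ) * (- Real.logb 2 (prodW ps pe τ.1 τ.2))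
        = pr μ (fun ω => Y ω = τ.1 ∧ Y3 ω = τ.2) * (- Real.logb 2 (prodW ps pe τ.1 τ.2)) := by
    intro τ _
    congr 1
    exact pr_congr μ fun ω => by rw [Prod.ext_iff]
  rw [Finset.sum_congr rfl hcongr]
  have hsub : ∑ τ ∈ Finset.univ.image (fun ω => (Y ω, Y3 ω)),
      pr μ (fun ω => Y ω = τ.1 ∧ Y3 ω = τ.2) * (- Real.logb 2 (prodW ps pe τ.1 τ.2))
      = ∑ τ ∈ (Finset.univ.image Y) ×ˢ (Finset.univ.image Y3),
        pr μ (fun ω => Y ω = τ.1 ∧ Y3 ω = τ.2) * (- Real.logb 2 (prodW ps pe τ.1 τ.2)) := by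
    refine Finset.sum_subset ?_ ?_
    · intro τ hτ
      obtain ⟨ω, _, rfl⟩ := Finset.mem_image.mp hτ
      exact Finset.mem_product.mpr ⟨Finset.mem_image_of_mem _ (Finset.mem_univ ω),
        Finset.mem_image_of_mem _ (Finset.mem_univ ω)⟩
    · intro τ _ hτ
      have : pr μ (fun ω => Y ω = τ.1 ∧ Y3 ω = τ.2) = 0 := by
        refine pr_eq_zero μ fun ω h => hτ ?_
        exact Finset.mem_image.mpr ⟨ω, Finset.mem_univ ω, Prod.ext h.1 h.2⟩
      rw [this, zero_mul]
  rw [hsub, Finset.sum_product (Finset.univ.image Y) (Finset.univ.image Y3)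
    (fun τ : List Bool × List (Option Bool) =>
      pr μ (fun ω => Y ω = τ.1 ∧ Y3 ω = τ.2) * (- Real.logb 2 (prodW ps pe τ.1 τ.2)))]
  rw [Finset.sum_congr rfl fun y (_ : y ∈ Finset.univ.image Y) =>
    T2_inner μ ps pe X Y Y3 hps hpe hspe hlen hcond y]
  have hfib := sum_fiber_pr μ Y (fun y : List Bool => (y.length : ℝ) *
    (-(ps * Real.logb 2 ps + pe * Real.logb 2 pe
      + (1 - ps - pe) * Real.logb 2 (1 - ps - pe))))
  rw [hfib, Finset.sum_mul]
  exact Finset.sum_congr rfl fun ω _ => by ring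

end T2

section T3
variable {S : Type*} (μ : FinProb Ω) (ps pe : ℝ)
variable (X : Ω → S) (Y : Ω → List Bool) (Y3 : Ω → List (Option Bool))

lemma T3_Sn (hps : 0 ≤ ps) (hpe : 0 ≤ pe) (hspe : ps + pe ≤ 1)
    (hlen : ∀ ω, (Y3 ω).length = (Y ω).length)
    (hcond : ∀ (x : S) (n : ℕ) (y : Fin n → Bool) (y' : Fin n → Option Bool),
      0 < pr μ (fun ω => X ω = x ∧ Y ω = List.ofFn y) →
      pr μ (fun ω => Y3 ω = List.ofFn y' ∧ X ω = x ∧ Y ω = List.ofFn y) /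
        pr μ (fun ω => X ω = x ∧ Y ω = List.ofFn y) = ∏ i, subErsKernel ps pe (y i) (y' i))
    (n : ℕ) :
    ∑ ω ∈ (Finset.univ.filter (fun ω => 0 < μ.p ω)).filter (fun ω => (Y ω).length = n),
        μ.p ω * (pr μ (fun ω' => Y3 ω' = Y3 ω) / pr μ (fun ω' => Y ω' = Y ω))
      ≤ pr μ (fun ω => (Y ω).length = n) * ((1 - pe) ^ 2 + 2 * pe ^ 2) ^ n := by
  classical
  have hCnn : (0:ℝ) ≤ (1 - pe) ^ 2 + 2 * pe ^ 2 := by positivity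
  -- extend to the full length fiber
  have hext : ∑ ω ∈ (Finset.univ.filter (fun ω => 0 < μ.p ω)).filter
        (fun ω => (Y ω).length = n),
        μ.p ω * (pr μ (fun ω' => Y3 ω' = Y3 ω) / pr μ (fun ω' => Y ω' = Y ω))
      = ∑ ω ∈ Finset.univ.filter (fun ω => (Y ω).length = n),
        μ.p ω * (pr μ (fun ω' => Y3 ω' = Y3 ω) / pr μ (fun ω' => Y ω' = Y ω)) := by
    refine Finset.sum_subset ?_ ?_
    · intro ω hω
      rw [Finset.mem_filter] at hω ⊢
      exact ⟨Finset.mem_univ ω, hω.2⟩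
    · intro ω hω hnω
      have hp0 : μ.p ω = 0 := by
        by_contra hc
        apply hnω
        rw [Finset.mem_filter] at hω ⊢
        exact ⟨Finset.mem_filter.mpr ⟨Finset.mem_univ ω,
          lt_of_le_of_ne (μ.nonneg ω) (Ne.symm hc)⟩, hω.2⟩
      rw [hp0, zero_mul]
  rw [hext]
  -- turn into an ite-sum over all of Ω, then fiber over (Y, Y3)
  have hite : ∑ ω ∈ Finset.univ.filter (fun ω => (Y ω).length = n),
        μ.p ω * (pr μ (fun ω' => Y3 ω' = Y3 ω) / pr μ (fun ω' => Y ω' = Y ω))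
      = ∑ ω, μ.p ω * (if (Y ω).length = n
          then pr μ (fun ω' => Y3 ω' = Y3 ω) / pr μ (fun ω' => Y ω' = Y ω) else 0) := by
    rw [Finset.sum_filter]
    refine Finset.sum_congr rfl fun ω _ => ?_
    by_cases h : (Y ω).length = n <;> simp [h]
  rw [hite]
  have hm := sum_fiber_pr μ (fun ω => (Y ω, Y3 ω))
    (fun τ : List Bool × List (Option Bool) => if τ.1.length = n
      then pr μ (fun ω => Y3 ω = τ.2) / pr μ (fun ω => Y ω = τ.1) else 0)
  have hite2 : ∑ ω, μ.p ω * (if (Y ω).length = n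
        then pr μ (fun ω' => Y3 ω' = Y3 ω) / pr μ (fun ω' => Y ω' = Y ω) else 0)
      = ∑ τ ∈ Finset.univ.image (fun ω => (Y ω, Y3 ω)),
        pr μ (fun ω => (Y ω, Y3 ω) = τ) * (if τ.1.length = n
          then pr μ (fun ω => Y3 ω = τ.2) / pr μ (fun ω => Y ω = τ.1) else 0) := by
    rw [hm]
  rw [hite2]
  -- per-pair bound
  have hpairlen : ∀ τ ∈ Finset.univ.image (fun ω => (Y ω, Y3 ω)),
      (τ : List Bool × List (Option Bool)).2.length = τ.1.length := by
    intro τ hτ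
    obtain ⟨ω, _, rfl⟩ := Finset.mem_image.mp hτ
    exact hlen ω
  have hpairmem : ∀ τ ∈ Finset.univ.image (fun ω => (Y ω, Y3 ω)),
      (τ : List Bool × List (Option Bool)).2 ∈ Finset.univ.image Y3 := by
    intro τ hτ
    obtain ⟨ω, _, rfl⟩ := Finset.mem_image.mp hτ
    exact Finset.mem_image_of_mem Y3 (Finset.mem_univ ω)
  have hb : ∀ τ ∈ Finset.univ.image (fun ω => (Y ω, Y3 ω)),
      pr μ (fun ω => (Y ω, Y3 ω) = τ) * (if τ.1.length = n
          then pr μ (fun ω => Y3 ω = τ.2) / pr μ (fun ω => Y ω = τ.1) else 0)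
      ≤ (if τ.1.length = n
          then prodW ps pe τ.1 τ.2 * pr μ (fun ω => Y3 ω = τ.2) else 0) := by
    intro τ hτ
    have hcg : pr μ (fun ω => (Y ω, Y3 ω) = τ) = pr μ (fun ω => Y ω = τ.1 ∧ Y3 ω = τ.2) :=
      pr_congr μ fun ω => by rw [Prod.ext_iff]
    by_cases h : τ.1.length = n
    · rw [if_pos h, if_pos h, hcg,
        chanK1 μ ps pe X Y Y3 hcond τ.1 τ.2 (hpairlen τ hτ)]
      rcases eq_or_lt_of_le (pr_nonneg μ (fun ω => Y ω = τ.1)) with h0 | h0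
      · rw [← h0, zero_mul, zero_mul]
        exact mul_nonneg (prodW_nonneg hps hpe hspe _ _) (pr_nonneg μ _)
      · have : pr μ (fun ω => Y ω = τ.1) * prodW ps pe τ.1 τ.2 *
            (pr μ (fun ω => Y3 ω = τ.2) / pr μ (fun ω => Y ω = τ.1))
            = prodW ps pe τ.1 τ.2 * pr μ (fun ω => Y3 ω = τ.2) := by
          field_simp
        rw [this]
    · rw [if_neg h, if_neg h, mul_zero]
  refine le_trans (Finset.sum_le_sum hb) ?_
  -- restrict to pairs with first-component length n
  rw [← Finset.sum_filter (fun τ : List Bool × List (Option Bool) => τ.1.length = n)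
    (fun τ => prodW ps pe τ.1 τ.2 * pr μ (fun ω => Y3 ω = τ.2))]
  -- reindex through tuples
  have hinjψ : ∀ a ∈ (Finset.univ.image (fun ω => (Y ω, Y3 ω))).filter
      (fun τ => τ.1.length = n),
      ∀ b ∈ (Finset.univ.image (fun ω => (Y ω, Y3 ω))).filter (fun τ => τ.1.length = n),
      (fun τ : List Bool × List (Option Bool) =>
        ((fun i : Fin n => τ.1.getD (i:ℕ) false), τ.2)) a
        = (fun τ : List Bool × List (Option Bool) =>
        ((fun i : Fin n => τ.1.getD (i:ℕ) false), τ.2)) b → a = b := by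
    intro a ha b hb hab
    simp only [Prod.mk.injEq] at hab
    have hla : a.1.length = n := (Finset.mem_filter.mp ha).2
    have hlb : b.1.length = n := (Finset.mem_filter.mp hb).2
    have h1 : a.1 = b.1 := by
      rw [← ofFn_getD a.1 hla false, ← ofFn_getD b.1 hlb false]
      exact congrArg List.ofFn hab.1
    exact Prod.ext h1 hab.2
  have himg := Finset.sum_image
    (s := (Finset.univ.image (fun ω => (Y ω, Y3 ω))).filter (fun τ => τ.1.length = n))
    (g := fun τ : List Bool × List (Option Bool) =>
      ((fun i : Fin n => τ.1.getD (i:ℕ) false), τ.2))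
    (f := fun σ : (Fin n → Bool) × List (Option Bool) =>
      prodW ps pe (List.ofFn σ.1) σ.2 * pr μ (fun ω => Y3 ω = σ.2)) (fun a ha b hb hab => hinjψ a ha b hb hab)
  have hFψ : ∀ τ ∈ (Finset.univ.image (fun ω => (Y ω, Y3 ω))).filter
      (fun τ => τ.1.length = n),
      prodW ps pe (List.ofFn (fun i : Fin n => τ.1.getD (i:ℕ) false)) τ.2
          * pr μ (fun ω => Y3 ω = τ.2)
        = prodW ps pe τ.1 τ.2 * pr μ (fun ω => Y3 ω = τ.2) := by
    intro τ hτ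
    rw [ofFn_getD τ.1 (Finset.mem_filter.mp hτ).2 false]
  rw [← Finset.sum_congr rfl hFψ, ← himg]
  -- bound by the full product set
  have hsubσ : ((Finset.univ.image (fun ω => (Y ω, Y3 ω))).filter
        (fun τ => τ.1.length = n)).image
      (fun τ : List Bool × List (Option Bool) =>
        ((fun i : Fin n => τ.1.getD (i:ℕ) false), τ.2))
      ⊆ (Finset.univ : Finset (Fin n → Bool)) ×ˢ
        ((Finset.univ.image Y3).filter (fun y' => y'.length = n)) := by
    intro σ hσ
    obtain ⟨τ, hτ, rfl⟩ := Finset.mem_image.mp hσ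
    have hτ' := Finset.mem_filter.mp hτ
    refine Finset.mem_product.mpr ⟨Finset.mem_univ _, Finset.mem_filter.mpr
      ⟨hpairmem τ hτ'.1, ?_⟩⟩
    rw [hpairlen τ hτ'.1, hτ'.2]
  refine le_trans (Finset.sum_le_sum_of_subset_of_nonneg hsubσ fun σ _ _ =>
    mul_nonneg (prodW_nonneg hps hpe hspe _ _) (pr_nonneg μ _)) ?_
  rw [Finset.sum_product_right (Finset.univ : Finset (Fin n → Bool))
    ((Finset.univ.image Y3).filter (fun y' => y'.length = n))
    (fun σ : (Fin n → Bool) × List (Option Bool) =>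
      prodW ps pe (List.ofFn σ.1) σ.2 * pr μ (fun ω => Y3 ω = σ.2))]
  -- inner collapse: sum over v of prodW (ofFn v) y'
  have hinner : ∀ y' ∈ (Finset.univ.image Y3).filter (fun y' => y'.length = n),
      ∑ v : Fin n → Bool, prodW ps pe (List.ofFn v) y' * pr μ (fun ω => Y3 ω = y')
        = (∏ i : Fin n, (subErsKernel ps pe false (y'.getD (i:ℕ) none)
            + subErsKernel ps pe true (y'.getD (i:ℕ) none))) * pr μ (fun ω => Y3 ω = y') := by
    intro y' _
    rw [← Finset.sum_mul]
    congr 1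
    rw [Finset.sum_congr rfl fun (v : Fin n → Bool) (_ : v ∈ Finset.univ) =>
      prodW_ofFn_left ps pe v y']
    have hps2 := Finset.prod_univ_sum (fun _ : Fin n => (Finset.univ : Finset Bool))
      (fun i b => subErsKernel ps pe b (y'.getD (i:ℕ) none))
    rw [Fintype.piFinset_univ] at hps2
    rw [← hps2]
    refine Finset.prod_congr rfl fun i _ => ?_
    rw [Fintype.sum_bool]
    ring
  rw [Finset.sum_congr rfl hinner]
  -- second collapse using the marginal of Y3
  have hmarg : ∀ y' : List (Option Bool), pr μ (fun ω => Y3 ω = y')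
      = ∑ y ∈ Finset.univ.image Y, pr μ (fun ω => Y ω = y ∧ Y3 ω = y') := by
    intro y'
    rw [pr_marg μ (fun ω => Y3 ω = y') Y]
    exact Finset.sum_congr rfl fun y _ => pr_congr μ fun ω => by tauto
  rw [Finset.sum_congr rfl fun y' (hy' : y' ∈ (Finset.univ.image Y3).filter
      (fun y' => y'.length = n)) => by rw [hmarg y', Finset.mul_sum]]
  rw [Finset.sum_comm]
  -- per y bound
  have hyb : ∀ y ∈ Finset.univ.image Y,
      ∑ y' ∈ (Finset.univ.image Y3).filter (fun y' => y'.length = n),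
        (∏ i : Fin n, (subErsKernel ps pe false (y'.getD (i:ℕ) none)
          + subErsKernel ps pe true (y'.getD (i:ℕ) none)))
          * pr μ (fun ω => Y ω = y ∧ Y3 ω = y')
      ≤ (if y.length = n
          then pr μ (fun ω => Y ω = y) * ((1 - pe) ^ 2 + 2 * pe ^ 2) ^ n else 0) := by
    intro y _
    by_cases hyn : y.length = n
    · rw [if_pos hyn]
      have hre : ∀ y' ∈ (Finset.univ.image Y3).filter (fun y' => y'.length = n),
          (∏ i : Fin n, (subErsKernel ps pe false (y'.getD (i:ℕ) none)
            + subErsKernel ps pe true (y'.getD (i:ℕ) none)))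
            * pr μ (fun ω => Y ω = y ∧ Y3 ω = y')
          = pr μ (fun ω => Y ω = y) * (prodW ps pe y y' *
              (∏ i : Fin n, (subErsKernel ps pe false (y'.getD (i:ℕ) none)
                + subErsKernel ps pe true (y'.getD (i:ℕ) none)))) := by
        intro y' hy'
        rw [chanK1 μ ps pe X Y Y3 hcond y y'
          (by rw [(Finset.mem_filter.mp hy').2, hyn])]
        ring
      rw [Finset.sum_congr rfl hre, ← Finset.mul_sum]
      refine mul_le_mul_of_nonneg_left ?_ (pr_nonneg μ _)
      -- ∑_{y' in filter} prodW y y' * ∏ gval ≤ C^n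
      have hinj2 : ∀ a ∈ (Finset.univ.image Y3).filter (fun y' => y'.length = n),
          ∀ b ∈ (Finset.univ.image Y3).filter (fun y' => y'.length = n),
          (fun i : Fin n => a.getD (i:ℕ) none) = (fun i : Fin n => b.getD (i:ℕ) none)
            → a = b := by
        intro a ha b hb hab
        rw [← ofFn_getD a (Finset.mem_filter.mp ha).2 none,
          ← ofFn_getD b (Finset.mem_filter.mp hb).2 none]
        exact congrArg List.ofFn hab
      have himg2 := Finset.sum_image
        (s := (Finset.univ.image Y3).filter (fun y' => y'.length = n))
        (g := fun y' : List (Option Bool) => fun i : Fin n => y'.getD (i:ℕ) none)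
        (f := fun w : Fin n → Option Bool => prodW ps pe y (List.ofFn w) *
          (∏ i : Fin n, (subErsKernel ps pe false ((List.ofFn w).getD (i:ℕ) none)
            + subErsKernel ps pe true ((List.ofFn w).getD (i:ℕ) none)))) (fun a ha b hb hab => hinj2 a ha b hb hab)
      have hFeq2 : ∀ y' ∈ (Finset.univ.image Y3).filter (fun y' => y'.length = n),
          prodW ps pe y (List.ofFn (fun i : Fin n => y'.getD (i:ℕ) none)) *
            (∏ i : Fin n, (subErsKernel ps pe false
                ((List.ofFn (fun i : Fin n => y'.getD (i:ℕ) none)).getD (i:ℕ) none)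
              + subErsKernel ps pe true
                ((List.ofFn (fun i : Fin n => y'.getD (i:ℕ) none)).getD (i:ℕ) none)))
          = prodW ps pe y y' *
              (∏ i : Fin n, (subErsKernel ps pe false (y'.getD (i:ℕ) none)
                + subErsKernel ps pe true (y'.getD (i:ℕ) none))) := by
        intro y' hy'
        rw [ofFn_getD y' (Finset.mem_filter.mp hy').2 none]
      calc ∑ y' ∈ (Finset.univ.image Y3).filter (fun y' => y'.length = n),
            prodW ps pe y y' *
              (∏ i : Fin n, (subErsKernel ps pe false (y'.getD (i:ℕ) none)
                + subErsKernel ps pe true (y'.getD (i:ℕ) none)))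
          = ∑ w ∈ ((Finset.univ.image Y3).filter (fun y' => y'.length = n)).image
              (fun y' : List (Option Bool) => fun i : Fin n => y'.getD (i:ℕ) none),
            prodW ps pe y (List.ofFn w) *
              (∏ i : Fin n, (subErsKernel ps pe false ((List.ofFn w).getD (i:ℕ) none)
                + subErsKernel ps pe true ((List.ofFn w).getD (i:ℕ) none))) := by
            rw [himg2]
            exact (Finset.sum_congr rfl hFeq2).symm
        _ ≤ ∑ w : Fin n → Option Bool,
            prodW ps pe y (List.ofFn w) *
              (∏ i : Fin n, (subErsKernel ps pe false ((List.ofFn w).getD (i:ℕ) none)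
                + subErsKernel ps pe true ((List.ofFn w).getD (i:ℕ) none))) := by
            refine Finset.sum_le_sum_of_subset_of_nonneg (Finset.subset_univ _)
              fun w _ _ => mul_nonneg (prodW_nonneg hps hpe hspe _ _)
                (Finset.prod_nonneg fun i _ => add_nonneg
                  (kernel_nonneg hps hpe hspe _ _) (kernel_nonneg hps hpe hspe _ _))
        _ = ((1 - pe) ^ 2 + 2 * pe ^ 2) ^ n := by
            have hgw : ∀ w : Fin n → Option Bool,
                prodW ps pe y (List.ofFn w) *
                  (∏ i : Fin n, (subErsKernel ps pe false ((List.ofFn w).getD (i:ℕ) none)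
                    + subErsKernel ps pe true ((List.ofFn w).getD (i:ℕ) none)))
                = ∏ i : Fin n, (subErsKernel ps pe (y.getD (i:ℕ) false) (w i) *
                    (subErsKernel ps pe false (w i) + subErsKernel ps pe true (w i))) := by
              intro w
              rw [prodW_ofFn_right ps pe y hyn w, ← Finset.prod_mul_distrib]
              refine Finset.prod_congr rfl fun i _ => ?_
              rw [getD_ofFn w i none]
            rw [Finset.sum_congr rfl fun w (_ : w ∈ Finset.univ) => hgw w]
            have hps3 := Finset.prod_univ_sum (fun _ : Fin n => (Finset.univ : Finset (Option Bool)))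
              (fun i c => subErsKernel ps pe (y.getD (i:ℕ) false) c *
                (subErsKernel ps pe false c + subErsKernel ps pe true c))
            rw [Fintype.piFinset_univ] at hps3
            rw [← hps3]
            rw [Finset.prod_congr rfl fun (i : Fin n) (_ : i ∈ Finset.univ) =>
              kernel_sum_g ps pe (y.getD (i:ℕ) false)]
            rw [Finset.prod_const, Finset.card_univ, Fintype.card_fin]
    · rw [if_neg hyn]
      refine le_of_eq (Finset.sum_eq_zero fun y' hy' => ?_)
      rw [chanK2 μ Y Y3 hlen y y'
        (by rw [(Finset.mem_filter.mp hy').2]; exact fun h => hyn h.symm), mul_zero]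
  refine le_trans (Finset.sum_le_sum hyb) ?_
  -- final: sum of the ite over image Y equals Pn * C^n
  have hPn2 : ∑ y ∈ Finset.univ.image Y,
      (if y.length = n then pr μ (fun ω => Y ω = y) * ((1 - pe) ^ 2 + 2 * pe ^ 2) ^ n else 0)
      = pr μ (fun ω => (Y ω).length = n) * ((1 - pe) ^ 2 + 2 * pe ^ 2) ^ n := by
    rw [pr_marg μ (fun ω => (Y ω).length = n) Y, Finset.sum_mul]
    refine Finset.sum_congr rfl fun y _ => ?_
    by_cases hyn : y.length = n
    · rw [if_pos hyn]
      congr 1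
      exact pr_congr μ fun ω => ⟨fun h => ⟨by rw [h]; exact hyn, h⟩, fun h => h.2⟩
    · rw [if_neg hyn]
      have : pr μ (fun ω => (Y ω).length = n ∧ Y ω = y) = 0 :=
        pr_eq_zero μ fun ω h => hyn (by rw [← h.2]; exact h.1)
      rw [this, zero_mul]
  rw [hPn2]

lemma T3_le (hps : 0 ≤ ps) (hpe : 0 ≤ pe) (hspe : ps + pe ≤ 1)
    (hlen : ∀ ω, (Y3 ω).length = (Y ω).length)
    (hcond : ∀ (x : S) (n : ℕ) (y : Fin n → Bool) (y' : Fin n → Option Bool),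
      0 < pr μ (fun ω => X ω = x ∧ Y ω = List.ofFn y) →
      pr μ (fun ω => Y3 ω = List.ofFn y' ∧ X ω = x ∧ Y ω = List.ofFn y) /
        pr μ (fun ω => X ω = x ∧ Y ω = List.ofFn y) = ∏ i, subErsKernel ps pe (y i) (y' i)) :
    ∑ ω ∈ Finset.univ.filter (fun ω => 0 < μ.p ω),
        μ.p ω * Real.logb 2 (pr μ (fun ω' => Y3 ω' = Y3 ω) / pr μ (fun ω' => Y ω' = Y ω))
      ≤ (∑ ω, μ.p ω * ((Y ω).length : ℝ)) * Real.logb 2 ((1 - pe) ^ 2 + 2 * pe ^ 2) := by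
  classical
  have hC : (0:ℝ) < (1 - pe) ^ 2 + 2 * pe ^ 2 := by
    nlinarith [sq_nonneg (1 - 2 * pe), sq_nonneg pe]
  have hgroup := Finset.sum_fiberwise_of_maps_to
    (s := Finset.univ.filter (fun ω => 0 < μ.p ω))
    (t := Finset.univ.image (fun ω => (Y ω).length)) (g := fun ω => (Y ω).length)
    (fun ω _ => Finset.mem_image_of_mem _ (Finset.mem_univ ω))
    (fun ω => μ.p ω * Real.logb 2 (pr μ (fun ω' => Y3 ω' = Y3 ω) /
      pr μ (fun ω' => Y ω' = Y ω)))
  rw [← hgroup]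
  have hRHS : (∑ ω, μ.p ω * ((Y ω).length : ℝ)) * Real.logb 2 ((1 - pe) ^ 2 + 2 * pe ^ 2)
      = ∑ n ∈ Finset.univ.image (fun ω => (Y ω).length),
          pr μ (fun ω => (Y ω).length = n) *
            ((n : ℝ) * Real.logb 2 ((1 - pe) ^ 2 + 2 * pe ^ 2)) := by
    have h1 := sum_fiber_pr μ (fun ω => (Y ω).length) (fun n => (n : ℝ))
    rw [← h1, Finset.sum_mul]
    exact Finset.sum_congr rfl fun n _ => by ring
  rw [hRHS]
  refine Finset.sum_le_sum fun n _ => ?_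
  have hPnB : ∑ ω ∈ Finset.filter (fun i => (Y i).length = n)
        (Finset.univ.filter (fun ω => 0 < μ.p ω)), μ.p ω
      = pr μ (fun ω => (Y ω).length = n) := by
    have h2 : pr μ (fun ω => (Y ω).length = n)
        = ∑ ω ∈ Finset.univ.filter (fun ω => (Y ω).length = n), μ.p ω := by
      unfold pr
      rw [Finset.sum_filter]
      exact Finset.sum_congr rfl fun ω _ => by by_cases h : (Y ω).length = n <;> simp [h]
    rw [h2]
    refine Finset.sum_subset ?_ ?_
    · intro ω hω
      rw [Finset.mem_filter] at hω ⊢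
      exact ⟨Finset.mem_univ ω, hω.2⟩
    · intro ω hω hnω
      by_contra hc
      apply hnω
      rw [Finset.mem_filter] at hω ⊢
      refine ⟨Finset.mem_filter.mpr ⟨Finset.mem_univ ω, ?_⟩, hω.2⟩
      rcases lt_or_eq_of_le (μ.nonneg ω) with h | h
      · exact h
      · exact absurd h.symm hc
  rcases eq_or_lt_of_le (pr_nonneg μ (fun ω => (Y ω).length = n)) with hPn0 | hPn0
  · -- the fiber is empty in measure
    rw [← hPn0, zero_mul]
    refine le_of_eq (Finset.sum_eq_zero fun ω hω => ?_)
    have hmem := Finset.mem_filter.mp hω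
    have hmem2 := Finset.mem_filter.mp hmem.1
    have hle : μ.p ω ≤ 0 := by
      calc μ.p ω ≤ ∑ ω' ∈ Finset.filter (fun i => (Y i).length = n)
            (Finset.univ.filter (fun ω => 0 < μ.p ω)), μ.p ω' :=
            Finset.single_le_sum (fun ω' _ => μ.nonneg ω') hω
        _ = 0 := by rw [hPnB, ← hPn0]
    exact absurd hmem2.2 (not_lt.mpr hle)
  · have hSn := T3_Sn μ ps pe X Y Y3 hps hpe hspe hlen hcond n
    have htpos : ∀ ω ∈ Finset.filter (fun i => (Y i).length = n)
        (Finset.univ.filter (fun ω => 0 < μ.p ω)),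
        0 < pr μ (fun ω' => Y3 ω' = Y3 ω) / pr μ (fun ω' => Y ω' = Y ω) := by
      intro ω hω
      have hp := (Finset.mem_filter.mp (Finset.mem_filter.mp hω).1).2
      exact div_pos (lt_of_lt_of_le hp (single_le_pr μ ω rfl))
        (lt_of_lt_of_le hp (single_le_pr μ ω rfl))
    have hw1 : ∑ ω ∈ Finset.filter (fun i => (Y i).length = n)
        (Finset.univ.filter (fun ω => 0 < μ.p ω)),
        μ.p ω / pr μ (fun ω => (Y ω).length = n) = 1 := by
      rw [← Finset.sum_div, hPnB, div_self (ne_of_gt hPn0)]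
    have hsum : ∑ ω ∈ Finset.filter (fun i => (Y i).length = n)
        (Finset.univ.filter (fun ω => 0 < μ.p ω)),
        (μ.p ω / pr μ (fun ω => (Y ω).length = n)) *
          (pr μ (fun ω' => Y3 ω' = Y3 ω) / pr μ (fun ω' => Y ω' = Y ω))
        ≤ ((1 - pe) ^ 2 + 2 * pe ^ 2) ^ n := by
      have heq : ∑ ω ∈ Finset.filter (fun i => (Y i).length = n)
          (Finset.univ.filter (fun ω => 0 < μ.p ω)),
          (μ.p ω / pr μ (fun ω => (Y ω).length = n)) *
            (pr μ (fun ω' => Y3 ω' = Y3 ω) / pr μ (fun ω' => Y ω' = Y ω))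
          = (∑ ω ∈ Finset.filter (fun i => (Y i).length = n)
            (Finset.univ.filter (fun ω => 0 < μ.p ω)),
            μ.p ω * (pr μ (fun ω' => Y3 ω' = Y3 ω) / pr μ (fun ω' => Y ω' = Y ω)))
            / pr μ (fun ω => (Y ω).length = n) := by
        rw [Finset.sum_div]
        exact Finset.sum_congr rfl fun ω _ => by ring
      rw [heq, div_le_iff₀ hPn0]
      calc ∑ ω ∈ Finset.filter (fun i => (Y i).length = n)
            (Finset.univ.filter (fun ω => 0 < μ.p ω)),
            μ.p ω * (pr μ (fun ω' => Y3 ω' = Y3 ω) / pr μ (fun ω' => Y ω' = Y ω))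
          ≤ pr μ (fun ω => (Y ω).length = n) * ((1 - pe) ^ 2 + 2 * pe ^ 2) ^ n := hSn
        _ = ((1 - pe) ^ 2 + 2 * pe ^ 2) ^ n * pr μ (fun ω => (Y ω).length = n) := by ring
    have hjen := sum_mul_logb_le (Finset.filter (fun i => (Y i).length = n)
        (Finset.univ.filter (fun ω => 0 < μ.p ω)))
      (fun ω => μ.p ω / pr μ (fun ω => (Y ω).length = n))
      (fun ω => pr μ (fun ω' => Y3 ω' = Y3 ω) / pr μ (fun ω' => Y ω' = Y ω))
      (fun ω _ => div_nonneg (μ.nonneg ω) (pr_nonneg μ _)) hw1 htpos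
      (pow_pos hC n) hsum
    rw [Real.logb_pow] at hjen
    have heq2 : ∑ ω ∈ Finset.filter (fun i => (Y i).length = n)
        (Finset.univ.filter (fun ω => 0 < μ.p ω)),
        μ.p ω * Real.logb 2 (pr μ (fun ω' => Y3 ω' = Y3 ω) / pr μ (fun ω' => Y ω' = Y ω))
        = pr μ (fun ω => (Y ω).length = n) *
          ∑ ω ∈ Finset.filter (fun i => (Y i).length = n)
            (Finset.univ.filter (fun ω => 0 < μ.p ω)),
            (μ.p ω / pr μ (fun ω => (Y ω).length = n)) *
              Real.logb 2 (pr μ (fun ω' => Y3 ω' = Y3 ω) / pr μ (fun ω' => Y ω' = Y ω)) := by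
      rw [Finset.mul_sum]
      refine Finset.sum_congr rfl fun ω _ => ?_
      field_simp
    rw [heq2]
    exact mul_le_mul_of_nonneg_left hjen hPn0.le

end T3

lemma condEntropy_eq_sum {S T : Type*} (μ : FinProb Ω) (U : Ω → S) (V : Ω → T) :
    condEntropy μ U V
      = ∑ ω, μ.p ω * Real.logb 2 (pr μ (fun ω' => V ω' = V ω) /
          pr μ (fun ω' => U ω' = U ω ∧ V ω' = V ω)) := by
  have key : ∀ (u : S) (v : T),
      pr μ (fun ω => U ω = u ∧ V ω = v) ≤ pr μ (fun ω => V ω = v) :=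
    fun u v => pr_mono μ fun ω h => h.2
  have hD : ∀ v ∈ (Finset.univ.image V).filter (fun v => 0 < pr μ (fun ω => V ω = v)),
      pr μ (fun ω => V ω = v) *
        (-∑ u ∈ Finset.univ.image U,
          (pr μ (fun ω => U ω = u ∧ V ω = v) / pr μ (fun ω => V ω = v)) *
            Real.logb 2 (pr μ (fun ω => U ω = u ∧ V ω = v) / pr μ (fun ω => V ω = v)))
      = ∑ u ∈ Finset.univ.image U,
          pr μ (fun ω => U ω = u ∧ V ω = v) *
            Real.logb 2 (pr μ (fun ω => V ω = v) / pr μ (fun ω => U ω = u ∧ V ω = v)) := by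
    intro v hv
    rw [Finset.mem_filter] at hv
    have hpv : pr μ (fun ω => V ω = v) ≠ 0 := ne_of_gt hv.2
    rw [mul_neg, Finset.mul_sum, ← Finset.sum_neg_distrib]
    refine Finset.sum_congr rfl fun u _ => ?_
    set a := pr μ (fun ω => U ω = u ∧ V ω = v) with ha
    set b := pr μ (fun ω => V ω = v) with hb
    rcases eq_or_lt_of_le (pr_nonneg μ (fun ω => U ω = u ∧ V ω = v)) with h0 | h0
    · rw [← ha] at h0
      simp [← h0]
    · rw [← ha] at h0
      have h1 : b * (a / b * Real.logb 2 (a / b)) = a * Real.logb 2 (a / b) := by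
        field_simp
      rw [h1, show b / a = (a / b)⁻¹ by rw [inv_div], Real.logb_inv]
      ring
  rw [condEntropy, Finset.sum_congr rfl hD]
  have hsub1 : ∑ v ∈ (Finset.univ.image V).filter (fun v => 0 < pr μ (fun ω => V ω = v)),
      ∑ u ∈ Finset.univ.image U,
        pr μ (fun ω => U ω = u ∧ V ω = v) *
          Real.logb 2 (pr μ (fun ω => V ω = v) / pr μ (fun ω => U ω = u ∧ V ω = v))
      = ∑ v ∈ Finset.univ.image V,
        ∑ u ∈ Finset.univ.image U,
          pr μ (fun ω => U ω = u ∧ V ω = v) *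
            Real.logb 2 (pr μ (fun ω => V ω = v) / pr μ (fun ω => U ω = u ∧ V ω = v)) := by
    refine Finset.sum_subset (Finset.filter_subset _ _) ?_
    intro v hv hnv
    have hbz : pr μ (fun ω => V ω = v) = 0 := by
      rw [Finset.mem_filter] at hnv
      push_neg at hnv
      exact le_antisymm (hnv hv) (pr_nonneg μ _)
    refine Finset.sum_eq_zero fun u _ => ?_
    have : pr μ (fun ω => U ω = u ∧ V ω = v) = 0 :=
      le_antisymm (by rw [← hbz]; exact key u v) (pr_nonneg μ _)
    rw [this, zero_mul]
  rw [hsub1]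
  have hswap : ∑ v ∈ Finset.univ.image V,
      ∑ u ∈ Finset.univ.image U,
        pr μ (fun ω => U ω = u ∧ V ω = v) *
          Real.logb 2 (pr μ (fun ω => V ω = v) / pr μ (fun ω => U ω = u ∧ V ω = v))
      = ∑ t ∈ (Finset.univ.image U) ×ˢ (Finset.univ.image V),
        pr μ (fun ω => U ω = t.1 ∧ V ω = t.2) *
          Real.logb 2 (pr μ (fun ω => V ω = t.2) / pr μ (fun ω => U ω = t.1 ∧ V ω = t.2)) :=
    (Finset.sum_product_right (Finset.univ.image U) (Finset.univ.image V)
      (fun t : S × T => pr μ (fun ω => U ω = t.1 ∧ V ω = t.2) *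
        Real.logb 2 (pr μ (fun ω => V ω = t.2) / pr μ (fun ω => U ω = t.1 ∧ V ω = t.2)))).symm
  rw [hswap]
  have hsub2 : ∑ t ∈ Finset.univ.image (fun ω => (U ω, V ω)),
        pr μ (fun ω => U ω = t.1 ∧ V ω = t.2) *
          Real.logb 2 (pr μ (fun ω => V ω = t.2) / pr μ (fun ω => U ω = t.1 ∧ V ω = t.2))
      = ∑ t ∈ (Finset.univ.image U) ×ˢ (Finset.univ.image V),
        pr μ (fun ω => U ω = t.1 ∧ V ω = t.2) *
          Real.logb 2 (pr μ (fun ω => V ω = t.2) / pr μ (fun ω => U ω = t.1 ∧ V ω = t.2)) := by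
    refine Finset.sum_subset ?_ ?_
    · intro t ht
      obtain ⟨ω, _, rfl⟩ := Finset.mem_image.mp ht
      exact Finset.mem_product.mpr ⟨Finset.mem_image_of_mem U (Finset.mem_univ ω),
        Finset.mem_image_of_mem V (Finset.mem_univ ω)⟩
    · intro t _ hnt
      have : pr μ (fun ω => U ω = t.1 ∧ V ω = t.2) = 0 := by
        refine pr_eq_zero μ fun ω h => hnt ?_
        refine Finset.mem_image.mpr ⟨ω, Finset.mem_univ ω, ?_⟩
        exact Prod.ext h.1 h.2
      rw [this, zero_mul]
  rw [← hsub2]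
  have hfin := sum_fiber_pr μ (fun ω => (U ω, V ω))
    (fun t => Real.logb 2 (pr μ (fun ω' => V ω' = t.2) / pr μ (fun ω' => U ω' = t.1 ∧ V ω' = t.2)))
  calc ∑ t ∈ Finset.univ.image (fun ω => (U ω, V ω)),
        pr μ (fun ω => U ω = t.1 ∧ V ω = t.2) *
          Real.logb 2 (pr μ (fun ω => V ω = t.2) / pr μ (fun ω => U ω = t.1 ∧ V ω = t.2))
      = ∑ t ∈ Finset.univ.image (fun ω => (U ω, V ω)),
        pr μ (fun ω => (U ω, V ω) = t) *
          Real.logb 2 (pr μ (fun ω => V ω = t.2) / pr μ (fun ω => U ω = t.1 ∧ V ω = t.2)) := by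
        refine Finset.sum_congr rfl fun t _ => ?_
        congr 1
        exact (pr_congr μ fun ω => by rw [Prod.ext_iff]).symm
    _ = ∑ ω, μ.p ω * Real.logb 2 (pr μ (fun ω' => V ω' = V ω) /
          pr μ (fun ω' => U ω' = U ω ∧ V ω' = V ω)) := hfin

theorem stmt11' {S : Type*} (μ : FinProb Ω)
    (ps pe : ℝ) (hps : 0 ≤ ps) (hpe : 0 ≤ pe) (hspe : ps + pe ≤ 1)
    (X : Ω → S) (Y : Ω → List Bool) (Y3 : Ω → List (Option Bool))
    (hlen : ∀ ω, (Y3 ω).length = (Y ω).length)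
    (hcond : ∀ (x : S) (n : ℕ) (y : Fin n → Bool) (y' : Fin n → Option Bool),
      0 < pr μ (fun ω => X ω = x ∧ Y ω = List.ofFn y) →
      pr μ (fun ω => Y3 ω = List.ofFn y' ∧ X ω = x ∧ Y ω = List.ofFn y) /
        pr μ (fun ω => X ω = x ∧ Y ω = List.ofFn y) = ∏ i, subErsKernel ps pe (y i) (y' i)) :
    condEntropy μ X Y3 ≤ condEntropy μ X Y +
      expLen μ Y * ((-(ps * Real.logb 2 ps) - pe * Real.logb 2 pe -
          (1 - ps - pe) * Real.logb 2 (1 - ps - pe)) +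
        Real.logb 2 ((1 - pe) ^ 2 + 2 * pe ^ 2)) := by
  classical
  have hres : ∀ f : Ω → ℝ, ∑ ω, μ.p ω * f ω
      = ∑ ω ∈ Finset.univ.filter (fun ω => 0 < μ.p ω), μ.p ω * f ω := by
    intro f
    refine (Finset.sum_subset (Finset.filter_subset _ _) fun ω _ hω => ?_).symm
    rw [Finset.mem_filter] at hω
    push_neg at hω
    rw [le_antisymm (hω (Finset.mem_univ ω)) (μ.nonneg ω), zero_mul]
  have hcXY3 : condEntropy μ X Y3 = ∑ ω ∈ Finset.univ.filter (fun ω => 0 < μ.p ω),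
      μ.p ω * Real.logb 2 (pr μ (fun ω' => Y3 ω' = Y3 ω) /
        pr μ (fun ω' => X ω' = X ω ∧ Y3 ω' = Y3 ω)) :=
    (condEntropy_eq_sum μ X Y3).trans (hres _)
  have hcXY : condEntropy μ X Y = ∑ ω ∈ Finset.univ.filter (fun ω => 0 < μ.p ω),
      μ.p ω * Real.logb 2 (pr μ (fun ω' => Y ω' = Y ω) /
        pr μ (fun ω' => X ω' = X ω ∧ Y ω' = Y ω)) :=
    (condEntropy_eq_sum μ X Y).trans (hres _)
  -- the pointwise split on the support
  have hsplit : ∀ ω ∈ Finset.univ.filter (fun ω => 0 < μ.p ω),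
      μ.p ω * Real.logb 2 (pr μ (fun ω' => Y3 ω' = Y3 ω) /
        pr μ (fun ω' => X ω' = X ω ∧ Y3 ω' = Y3 ω))
      = μ.p ω * Real.logb 2 (pr μ (fun ω' => Y ω' = Y ω) /
          pr μ (fun ω' => X ω' = X ω ∧ Y ω' = Y ω))
        + (μ.p ω * Real.logb 2 (pr μ (fun ω' => X ω' = X ω ∧ Y ω' = Y ω)
            * pr μ (fun ω' => Y ω' = Y ω ∧ Y3 ω' = Y3 ω) /
            (pr μ (fun ω' => X ω' = X ω ∧ Y3 ω' = Y3 ω) * pr μ (fun ω' => Y ω' = Y ω)))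
          + (μ.p ω * (- Real.logb 2 (prodW ps pe (Y ω) (Y3 ω)))
            + μ.p ω * Real.logb 2 (pr μ (fun ω' => Y3 ω' = Y3 ω) /
                pr μ (fun ω' => Y ω' = Y ω)))) := by
    intro ω hω
    have hp : 0 < μ.p ω := (Finset.mem_filter.mp hω).2
    have hpY : 0 < pr μ (fun ω' => Y ω' = Y ω) :=
      lt_of_lt_of_le hp (single_le_pr μ ω rfl)
    have hpY3 : 0 < pr μ (fun ω' => Y3 ω' = Y3 ω) :=
      lt_of_lt_of_le hp (single_le_pr μ ω rfl)
    have hpXY : 0 < pr μ (fun ω' => X ω' = X ω ∧ Y ω' = Y ω) :=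
      lt_of_lt_of_le hp (single_le_pr μ ω ⟨rfl, rfl⟩)
    have hpXY3 : 0 < pr μ (fun ω' => X ω' = X ω ∧ Y3 ω' = Y3 ω) :=
      lt_of_lt_of_le hp (single_le_pr μ ω ⟨rfl, rfl⟩)
    have hpYY3 : 0 < pr μ (fun ω' => Y ω' = Y ω ∧ Y3 ω' = Y3 ω) :=
      lt_of_lt_of_le hp (single_le_pr μ ω ⟨rfl, rfl⟩)
    have hYY3 : pr μ (fun ω' => Y ω' = Y ω ∧ Y3 ω' = Y3 ω)
        = pr μ (fun ω' => Y ω' = Y ω) * prodW ps pe (Y ω) (Y3 ω) :=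
      chanK1 μ ps pe X Y Y3 hcond (Y ω) (Y3 ω) (hlen ω)
    have hPW : 0 < prodW ps pe (Y ω) (Y3 ω) := by
      have h := hpYY3
      rw [hYY3] at h
      rcases mul_pos_iff.mp h with ⟨_, h2⟩ | ⟨h1, _⟩
      · exact h2
      · exact absurd hpY (not_lt.mpr h1.le)
    have l1 : Real.logb 2 (pr μ (fun ω' => Y3 ω' = Y3 ω) /
        pr μ (fun ω' => X ω' = X ω ∧ Y3 ω' = Y3 ω))
        = Real.logb 2 (pr μ (fun ω' => Y3 ω' = Y3 ω))
          - Real.logb 2 (pr μ (fun ω' => X ω' = X ω ∧ Y3 ω' = Y3 ω)) :=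
      Real.logb_div (ne_of_gt hpY3) (ne_of_gt hpXY3)
    have l2 : Real.logb 2 (pr μ (fun ω' => Y ω' = Y ω) /
        pr μ (fun ω' => X ω' = X ω ∧ Y ω' = Y ω))
        = Real.logb 2 (pr μ (fun ω' => Y ω' = Y ω))
          - Real.logb 2 (pr μ (fun ω' => X ω' = X ω ∧ Y ω' = Y ω)) :=
      Real.logb_div (ne_of_gt hpY) (ne_of_gt hpXY)
    have l3 : Real.logb 2 (pr μ (fun ω' => X ω' = X ω ∧ Y ω' = Y ω)
        * pr μ (fun ω' => Y ω' = Y ω ∧ Y3 ω' = Y3 ω) /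
        (pr μ (fun ω' => X ω' = X ω ∧ Y3 ω' = Y3 ω) * pr μ (fun ω' => Y ω' = Y ω)))
        = Real.logb 2 (pr μ (fun ω' => X ω' = X ω ∧ Y ω' = Y ω))
          + Real.logb 2 (pr μ (fun ω' => Y ω' = Y ω ∧ Y3 ω' = Y3 ω))
          - (Real.logb 2 (pr μ (fun ω' => X ω' = X ω ∧ Y3 ω' = Y3 ω))
            + Real.logb 2 (pr μ (fun ω' => Y ω' = Y ω))) := by
      rw [Real.logb_div (by positivity) (by positivity),
        Real.logb_mul (ne_of_gt hpXY) (ne_of_gt hpYY3),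
        Real.logb_mul (ne_of_gt hpXY3) (ne_of_gt hpY)]
    have l4 : Real.logb 2 (prodW ps pe (Y ω) (Y3 ω))
        = Real.logb 2 (pr μ (fun ω' => Y ω' = Y ω ∧ Y3 ω' = Y3 ω))
          - Real.logb 2 (pr μ (fun ω' => Y ω' = Y ω)) := by
      have : prodW ps pe (Y ω) (Y3 ω)
          = pr μ (fun ω' => Y ω' = Y ω ∧ Y3 ω' = Y3 ω) / pr μ (fun ω' => Y ω' = Y ω) := by
        rw [hYY3]
        field_simp
      rw [this, Real.logb_div (ne_of_gt hpYY3) (ne_of_gt hpY)]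
    have l5 : Real.logb 2 (pr μ (fun ω' => Y3 ω' = Y3 ω) / pr μ (fun ω' => Y ω' = Y ω))
        = Real.logb 2 (pr μ (fun ω' => Y3 ω' = Y3 ω))
          - Real.logb 2 (pr μ (fun ω' => Y ω' = Y ω)) :=
      Real.logb_div (ne_of_gt hpY3) (ne_of_gt hpY)
    rw [l1, l2, l3, l4, l5]
    ring
  rw [hcXY3, Finset.sum_congr rfl hsplit, Finset.sum_add_distrib, Finset.sum_add_distrib,
    Finset.sum_add_distrib]
  have hT1 := T1_le μ X Y Y3
  have hT2 := T2_eq μ ps pe X Y Y3 hps hpe hspe hlen hcond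
  have hT3 := T3_le μ ps pe X Y Y3 hps hpe hspe hlen hcond
  have hEL : expLen μ Y = ∑ ω, μ.p ω * ((Y ω).length : ℝ) := rfl
  have hring : expLen μ Y * ((-(ps * Real.logb 2 ps) - pe * Real.logb 2 pe -
      (1 - ps - pe) * Real.logb 2 (1 - ps - pe)) + Real.logb 2 ((1 - pe) ^ 2 + 2 * pe ^ 2))
      = (∑ ω, μ.p ω * ((Y ω).length : ℝ)) *
          (-(ps * Real.logb 2 ps + pe * Real.logb 2 pe
            + (1 - ps - pe) * Real.logb 2 (1 - ps - pe)))
        + (∑ ω, μ.p ω * ((Y ω).length : ℝ)) * Real.logb 2 ((1 - pe) ^ 2 + 2 * pe ^ 2) := by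
    rw [← hEL]
    ring
  rw [← hcXY]
  linarith [hT1, hT2, hT3]

end Stmt11Aux

/-- for the substitution/erasure kernel,
`I(X;Y⁽³⁾) ≥ I(X;Y) − E[|Y|]·[H(ps, pe, 1−ps−pe) + log₂((1−pe)² + 2pe²)]`. -/
theorem stmt11 {Ω S : Type*} [Fintype Ω] (μ : FinProb Ω)
    (ps pe : ℝ) (hps : 0 ≤ ps) (hpe : 0 ≤ pe) (hspe : ps + pe ≤ 1)
    (X : Ω → S) (Y : Ω → List Bool) (Y3 : Ω → List (Option Bool))
    (hlen : ∀ ω, (Y3 ω).length = (Y ω).length)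
    (hcond : ∀ (x : S) (n : ℕ) (y : Fin n → Bool) (y' : Fin n → Option Bool),
      0 < pr μ (fun ω => X ω = x ∧ Y ω = List.ofFn y) →
      pr μ (fun ω => Y3 ω = List.ofFn y' ∧ X ω = x ∧ Y ω = List.ofFn y) /
        pr μ (fun ω => X ω = x ∧ Y ω = List.ofFn y) = ∏ i, subErsKernel ps pe (y i) (y' i)) :
    mutualInfo μ X Y3 ≥ mutualInfo μ X Y -
      expLen μ Y * ((-(ps * Real.logb 2 ps) - pe * Real.logb 2 pe -
          (1 - ps - pe) * Real.logb 2 (1 - ps - pe)) +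
        Real.logb 2 ((1 - pe) ^ 2 + 2 * pe ^ 2)) := by
  have h := Stmt11Aux.stmt11' μ ps pe hps hpe hspe X Y Y3 hlen hcond
  simp only [mutualInfo]
  linarith

end
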